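/- Let G be a locally compact group, H a closed subgroup, μ a quasi-invariant regular Borel measure on G/H, and π a unitary representation of H on a Hilbert space 𝓗. Then the formula (ind_H^G π)(x)ξ(y) = (dμ_{x⁻¹}/dμ (yH))^{1/2} ξ(x⁻¹y) defines a unitary operator on the Hilbert space 𝓗(π) of measurable ξ : G → 𝓗 with ξ(xh) = π(h⁻¹)ξ(x) and ∫_{G/H} ‖ξ(x)‖² dμ < ∞, and x ↦ (ind_H^G π)(x) is a group homomorphism into the unitary group. -/

import Mathlib

open MeasureTheory
open scoped ComplexInnerProductSpace
open scoped ENNReal NNReal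

theorem lintegral_wd_arb {α : Type*} [MeasurableSpace α] (μ : Measure α)
    (φ w : α → ℝ≥0∞) (hw : Measurable w) (hwfin : ∀ a, w a ≠ ∞) :
    ∫⁻ a, w a ∂(μ.withDensity φ) = ∫⁻ a, w a * φ a ∂μ := by
  have simple_case : ∀ v : SimpleFunc α ℝ≥0,
      ∫⁻ a, (v a : ℝ≥0∞) ∂(μ.withDensity φ) = ∫⁻ a, (v a : ℝ≥0∞) * φ a ∂μ := by
    intro v
    induction v using SimpleFunc.induction with
    | const c hs =>
      rename_i s
      have hco : ∀ a : α, ((SimpleFunc.piecewise s hs (SimpleFunc.const α c)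
          (SimpleFunc.const α 0)) a : ℝ≥0∞) = s.indicator (fun _ => (c : ℝ≥0∞)) a := by
        intro a
        by_cases ha : a ∈ s <;> simp [SimpleFunc.piecewise_apply, ha, Set.indicator_apply]
      calc ∫⁻ a, ((SimpleFunc.piecewise s hs (SimpleFunc.const α c)
              (SimpleFunc.const α 0)) a : ℝ≥0∞) ∂(μ.withDensity φ)
          = ∫⁻ a, s.indicator (fun _ => (c : ℝ≥0∞)) a ∂(μ.withDensity φ) :=
            lintegral_congr hco
        _ = (c : ℝ≥0∞) * (μ.withDensity φ) s := by
            rw [lintegral_indicator hs, setLIntegral_const]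
        _ = (c : ℝ≥0∞) * ∫⁻ a in s, φ a ∂μ := by rw [withDensity_apply φ hs]
        _ = ∫⁻ a in s, (c : ℝ≥0∞) * φ a ∂μ := (lintegral_const_mul' _ _ ENNReal.coe_ne_top).symm
        _ = ∫⁻ a, s.indicator (fun a => (c : ℝ≥0∞) * φ a) a ∂μ := (lintegral_indicator hs _).symm
        _ = ∫⁻ a, ((SimpleFunc.piecewise s hs (SimpleFunc.const α c)
              (SimpleFunc.const α 0)) a : ℝ≥0∞) * φ a ∂μ := by
            refine lintegral_congr fun a => ?_
            rw [hco a]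
            by_cases ha : a ∈ s <;> simp [Set.indicator_apply, ha]
    | add hd hf hg =>
      rename_i f g
      have hfm : Measurable fun a => (f a : ℝ≥0∞) := f.measurable.coe_nnreal_ennreal
      have hs : MeasurableSet (Function.support (⇑g)) := g.measurableSet_support
      set S := Function.support (⇑g) with hS
      -- decompose the RHS integral of the sum
      have congr1 : ∫⁻ a in S, ((f + g) a : ℝ≥0∞) * φ a ∂μ
          = ∫⁻ a in S, (g a : ℝ≥0∞) * φ a ∂μ := by
        refine lintegral_congr_ae ((ae_restrict_mem hs).mono fun a ha => ?_)
        have hfa : f a = 0 := by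
          by_contra h
          exact (Set.disjoint_left.1 hd (Function.mem_support.2 h)) ha
        simp [hfa]
      have congr2 : ∫⁻ a in Sᶜ, ((f + g) a : ℝ≥0∞) * φ a ∂μ
          = ∫⁻ a in Sᶜ, (f a : ℝ≥0∞) * φ a ∂μ := by
        refine lintegral_congr_ae ((ae_restrict_mem hs.compl).mono fun a ha => ?_)
        have hga : g a = 0 := Function.notMem_support.1 ha
        simp [hga]
      have zero1 : ∫⁻ a in Sᶜ, (g a : ℝ≥0∞) * φ a ∂μ = 0 := by
        have : ∫⁻ a in Sᶜ, (g a : ℝ≥0∞) * φ a ∂μ = ∫⁻ _ in Sᶜ, (0:ℝ≥0∞) ∂μ := by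
          refine lintegral_congr_ae ((ae_restrict_mem hs.compl).mono fun a ha => ?_)
          have hga : g a = 0 := Function.notMem_support.1 ha
          simp [hga]
        simpa using this
      have zero2 : ∫⁻ a in S, (f a : ℝ≥0∞) * φ a ∂μ = 0 := by
        have : ∫⁻ a in S, (f a : ℝ≥0∞) * φ a ∂μ = ∫⁻ _ in S, (0:ℝ≥0∞) ∂μ := by
          refine lintegral_congr_ae ((ae_restrict_mem hs).mono fun a ha => ?_)
          have hfa : f a = 0 := by
            by_contra h
            exact (Set.disjoint_left.1 hd (Function.mem_support.2 h)) ha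
          simp [hfa]
        simpa using this
      have rhs_split : ∫⁻ a, ((f + g) a : ℝ≥0∞) * φ a ∂μ
          = ∫⁻ a, (f a : ℝ≥0∞) * φ a ∂μ + ∫⁻ a, (g a : ℝ≥0∞) * φ a ∂μ := by
        rw [← lintegral_add_compl (fun a => ((f + g) a : ℝ≥0∞) * φ a) hs,
          ← lintegral_add_compl (fun a => ((f) a : ℝ≥0∞) * φ a) hs,
          ← lintegral_add_compl (fun a => ((g) a : ℝ≥0∞) * φ a) hs,
          congr1, congr2, zero1, zero2]
        ring
      have lhs_split : ∫⁻ a, ((f + g) a : ℝ≥0∞) ∂(μ.withDensity φ)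
          = ∫⁻ a, (f a : ℝ≥0∞) ∂(μ.withDensity φ) + ∫⁻ a, (g a : ℝ≥0∞) ∂(μ.withDensity φ) := by
        have : ∀ a, ((f + g) a : ℝ≥0∞) = (f a : ℝ≥0∞) + (g a : ℝ≥0∞) := by
          intro a; simp
        rw [lintegral_congr this, lintegral_add_left hfm]
      rw [lhs_split, rhs_split, hf, hg]
  apply le_antisymm
  · rw [lintegral_eq_nnreal w (μ.withDensity φ)]
    refine iSup₂_le fun u hu => ?_
    have : (u.map ((↑) : ℝ≥0 → ℝ≥0∞)).lintegral (μ.withDensity φ)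
        = ∫⁻ a, (u a : ℝ≥0∞) ∂(μ.withDensity φ) := by
      rw [← SimpleFunc.lintegral_eq_lintegral]
      exact lintegral_congr fun a => by simp
    rw [this, simple_case u]
    exact lintegral_mono fun a => mul_le_mul_left (hu a) _
  · rw [lintegral_eq_nnreal (fun a => w a * φ a) μ]
    refine iSup₂_le fun v hv => ?_
    have hlv : (v.map ((↑) : ℝ≥0 → ℝ≥0∞)).lintegral μ = ∫⁻ a, (v a : ℝ≥0∞) ∂μ := by
      rw [← SimpleFunc.lintegral_eq_lintegral]
      exact lintegral_congr fun a => by simp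
    rw [hlv]
    set ψ : α → ℝ≥0∞ := fun a => (v a : ℝ≥0∞) / w a with hψdef
    have hψm : Measurable ψ := v.measurable.coe_nnreal_ennreal.div hw
    have hv0 : ∀ a, w a = 0 → (v a : ℝ≥0∞) = 0 := by
      intro a h0
      have := hv a
      rw [h0, zero_mul] at this
      exact le_antisymm this (zero_le)
    have hvw : ∀ a, (v a : ℝ≥0∞) = w a * ψ a := by
      intro a
      rcases eq_or_ne (w a) 0 with h0 | h0
      · simp [hψdef, h0, hv0 a h0]
      · exact (ENNReal.mul_div_cancel h0 (hwfin a)).symm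
    have hψφ : ∀ a, ψ a ≤ φ a := by
      intro a
      rcases eq_or_ne (w a) 0 with h0 | h0
      · simp [hψdef, h0, hv0 a h0]
      · refine ENNReal.div_le_of_le_mul ?_
        rw [mul_comm]
        exact hv a
    have hwd : μ.withDensity ψ ≤ μ.withDensity φ := by
      refine Measure.le_intro fun s hms _ => ?_
      rw [withDensity_apply ψ hms, withDensity_apply φ hms]
      exact lintegral_mono fun a => hψφ a
    calc ∫⁻ a, (v a : ℝ≥0∞) ∂μ = ∫⁻ a, w a * ψ a ∂μ := lintegral_congr hvw
      _ = ∫⁻ a, (ψ * w) a ∂μ := lintegral_congr fun a => mul_comm _ _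
      _ = ∫⁻ a, w a ∂(μ.withDensity ψ) :=
          (lintegral_withDensity_eq_lintegral_mul μ hψm hw).symm
      _ ≤ ∫⁻ a, w a ∂(μ.withDensity φ) := lintegral_mono' hwd le_rfl

theorem sigmaFinite_restrict_of_cover {α : Type*} [MeasurableSpace α] (μ : Measure α)
    {B : Set α} (hB : MeasurableSet B) (b : ℕ → Set α) (hbm : ∀ n, MeasurableSet (b n))
    (hcov : B ⊆ ⋃ n, b n) (hfin : ∀ n, μ (b n ∩ B) < ∞) :
    SigmaFinite (μ.restrict B) := by
  refine ⟨⟨⟨fun n => b n ∪ Bᶜ, fun _ => Set.mem_univ _, fun n => ?_, ?_⟩⟩⟩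
  · rw [Measure.restrict_apply ((hbm n).union hB.compl)]
    have : (b n ∪ Bᶜ) ∩ B = b n ∩ B := by
      ext a; simp only [Set.mem_inter_iff, Set.mem_union, Set.mem_compl_iff]; tauto
    rw [this]; exact hfin n
  · apply Set.eq_univ_of_forall
    intro a
    by_cases ha : a ∈ B
    · obtain ⟨s, ⟨n, rfl⟩, hn⟩ := hcov ha
      exact Set.mem_iUnion.2 ⟨n, Or.inl hn⟩
    · exact Set.mem_iUnion.2 ⟨0, Or.inr ha⟩

theorem exists_measurable_env {α : Type*} [MeasurableSpace α] (μ : Measure α) [SigmaFinite μ]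
    (φ : α → ℝ≥0∞) :
    ∃ g : α → ℝ≥0∞, Measurable g ∧ (∀ a, g a ≤ φ a) ∧
      ∀ s : Set α, MeasurableSet s → ∫⁻ a in s, g a ∂μ = ∫⁻ a in s, φ a ∂μ := by
  set ψ : ℕ → ℕ → α → ℝ≥0∞ :=
    fun k n a => (spanningSets μ k).indicator (fun a => min (φ a) n) a with hψdef
  have hψ_le : ∀ k n a, ψ k n a ≤ φ a := by
    intro k n a
    by_cases ha : a ∈ spanningSets μ k <;>
      simp [hψdef, Set.indicator_apply, ha, min_le_left]
  have hψ_fin : ∀ k n, ∫⁻ a, ψ k n a ∂μ < ∞ := by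
    intro k n
    calc ∫⁻ a, ψ k n a ∂μ
        ≤ ∫⁻ a, (spanningSets μ k).indicator (fun _ => (n : ℝ≥0∞)) a ∂μ := by
          refine lintegral_mono fun a => ?_
          by_cases ha : a ∈ spanningSets μ k <;>
            simp [hψdef, Set.indicator_apply, ha, min_le_right]
      _ = (n : ℝ≥0∞) * μ (spanningSets μ k) := by
          rw [lintegral_indicator (measurableSet_spanningSets μ k), setLIntegral_const]
      _ < ∞ := ENNReal.mul_lt_top (by simp) (measure_spanningSets_lt_top μ k)
  choose m hm_meas hm_le hm_int using fun k n => exists_measurable_le_lintegral_eq μ (ψ k n)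
  have hm_set : ∀ k n s, MeasurableSet s →
      ∫⁻ a in s, m k n a ∂μ = ∫⁻ a in s, ψ k n a ∂μ := by
    intro k n s hs
    have h1 : ∫⁻ a in s, m k n a ∂μ ≤ ∫⁻ a in s, ψ k n a ∂μ :=
      lintegral_mono fun a => hm_le k n a
    have h2 : ∫⁻ a in sᶜ, m k n a ∂μ ≤ ∫⁻ a in sᶜ, ψ k n a ∂μ :=
      lintegral_mono fun a => hm_le k n a
    have h3 := lintegral_add_compl (fun a => m k n a) hs (μ := μ)
    have h4 := lintegral_add_compl (fun a => ψ k n a) hs (μ := μ)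
    have htot : ∫⁻ a in s, m k n a ∂μ + ∫⁻ a in sᶜ, m k n a ∂μ
        = ∫⁻ a in s, ψ k n a ∂μ + ∫⁻ a in sᶜ, ψ k n a ∂μ := by
      rw [h3, h4, ← hm_int k n]
    refine le_antisymm h1 ?_
    have hfin2 : ∫⁻ a in sᶜ, ψ k n a ∂μ ≠ ∞ := by
      refine ne_of_lt (lt_of_le_of_lt ?_ (hψ_fin k n))
      rw [← h4]; exact le_add_self
    have : ∫⁻ a in s, ψ k n a ∂μ + ∫⁻ a in sᶜ, ψ k n a ∂μ
        ≤ ∫⁻ a in s, m k n a ∂μ + ∫⁻ a in sᶜ, ψ k n a ∂μ := by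
      rw [← htot]
      exact add_le_add_right h2 _
    exact (WithTop.add_le_add_iff_right hfin2).1 this
  -- the envelope
  refine ⟨fun a => ⨆ k, ⨆ n, m k n a, by measurability, fun a => ?_, fun s hs => ?_⟩
  · exact iSup_le fun k => iSup_le fun n => (hm_le k n a).trans (hψ_le k n a)
  · refine le_antisymm (lintegral_mono fun a =>
      iSup_le fun k => iSup_le fun n => (hm_le k n a).trans (hψ_le k n a)) ?_
    -- key inequality
    have key : ∫⁻ a in s, φ a ∂μ ≤ ⨆ k, ⨆ n, ∫⁻ a in s, ψ k n a ∂μ := by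
      rw [lintegral_eq_nnreal φ (μ.restrict s)]
      refine iSup₂_le fun u hu => ?_
      have hlu : (u.map ((↑) : ℝ≥0 → ℝ≥0∞)).lintegral (μ.restrict s)
          = ∫⁻ a, (u a : ℝ≥0∞) ∂(μ.restrict s) := by
        rw [← SimpleFunc.lintegral_eq_lintegral]
        exact lintegral_congr fun a => by simp
      rw [hlu]
      obtain ⟨C, hC⟩ := u.exists_forall_le
      obtain ⟨N, hN⟩ := exists_nat_ge (C : ℝ)
      have huN : ∀ a, (u a : ℝ≥0∞) ≤ (N : ℝ≥0∞) := by
        intro a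
        have h1 : (u a : ℝ≥0) ≤ C := hC a
        have : ((u a : ℝ≥0) : ℝ≥0∞) ≤ ((C : ℝ≥0) : ℝ≥0∞) := by exact_mod_cast h1
        refine this.trans ?_
        rw [show ((N : ℝ≥0∞)) = ((N : ℝ≥0) : ℝ≥0∞) by simp]
        exact_mod_cast (by exact_mod_cast hN : (C : ℝ≥0) ≤ (N : ℝ≥0))
      have mct : ∫⁻ a, (u a : ℝ≥0∞) ∂(μ.restrict s)
          = ⨆ k, ∫⁻ a, (spanningSets μ k).indicator (fun a => (u a : ℝ≥0∞)) a ∂(μ.restrict s) := by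
        rw [← lintegral_iSup]
        · refine lintegral_congr fun a => ?_
          obtain ⟨k, hk⟩ : ∃ k, a ∈ spanningSets μ k := by
            have := iUnion_spanningSets μ
            have : a ∈ ⋃ k, spanningSets μ k := this ▸ Set.mem_univ a
            exact Set.mem_iUnion.1 this
          refine le_antisymm ?_ (iSup_le fun j => by
            by_cases hj : a ∈ spanningSets μ j <;> simp [Set.indicator_apply, hj])
          refine le_iSup_of_le k ?_
          simp [Set.indicator_apply, hk]
        · exact fun k => (u.measurable.coe_nnreal_ennreal).indicator
            (measurableSet_spanningSets μ k)
        · intro i j hij a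
          by_cases ha : a ∈ spanningSets μ i
          · have : a ∈ spanningSets μ j := monotone_spanningSets μ hij ha
            simp [Set.indicator_apply, ha, this]
          · simp [Set.indicator_apply, ha]
      rw [mct]
      refine iSup_le fun k => ?_
      refine le_trans ?_ (le_iSup_of_le k (le_iSup_of_le N le_rfl))
      rw [show ∫⁻ a in s, ψ k N a ∂μ = ∫⁻ a, ψ k N a ∂(μ.restrict s) from rfl]
      refine lintegral_mono fun a => ?_
      by_cases ha : a ∈ spanningSets μ k
      · rw [Set.indicator_of_mem ha, hψdef]
        simp only []
        rw [Set.indicator_of_mem ha]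
        exact le_min (hu a) (huN a)
      · rw [Set.indicator_of_notMem ha, hψdef]
        simp only []
        rw [Set.indicator_of_notMem ha]
    refine key.trans (iSup_le fun k => iSup_le fun n => ?_)
    rw [← hm_set k n s hs]
    exact lintegral_mono fun a => le_iSup_of_le k (le_iSup_of_le n le_rfl)


/-- The induced representation formula
`(ind_H^G π)(x) ξ (y) = (dμ_{x⁻¹}/dμ (yH))^{1/2} ξ(x⁻¹ y)`, where
`c x = dμ_{x⁻¹}/dμ` is a choice of Radon–Nikodym derivative. -/
noncomputable def indRep {G : Type*} [Group G] (H : Subgroup G)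
    {𝓗 : Type*} [AddCommGroup 𝓗] [Module ℝ 𝓗]
    (c : G → G ⧸ H → ℝ) (x : G) (ξ : G → 𝓗) : G → 𝓗 :=
  fun y => Real.sqrt (c x (QuotientGroup.mk y)) • ξ (x⁻¹ * y)

/-- For a closed subgroup `H ≤ G`, a quasi-invariant regular Borel measure `μ`
on `G/H` and a unitary representation `π` of `H` on `𝓗`, the induced
representation formula preserves the equivariance condition defining `𝓗(π)`,
preserves the inner product (so each `ind_H^G π (x)` is unitary), and is
multiplicative in `x` (a homomorphism into the unitary group). -/
theorem induced_representation_unitary_homomorphism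
    {G : Type*} [Group G] [TopologicalSpace G] [IsTopologicalGroup G]
    [LocallyCompactSpace G]
    (H : Subgroup G) (hHclosed : IsClosed (H : Set G))
    [MeasurableSpace (G ⧸ H)] [BorelSpace (G ⧸ H)]
    (μ : Measure (G ⧸ H)) [μ.Regular]
    -- `c x` is an everywhere-defined version of the Radon–Nikodym derivative
    -- `dμ_{x⁻¹}/dμ`, witnessing quasi-invariance of `μ`
    (c : G → G ⧸ H → ℝ) (hcpos : ∀ x p, 0 < c x p)
    (hqi : ∀ x : G,
      μ.map (fun p : G ⧸ H => x • p) = μ.withDensity (fun p => ENNReal.ofReal (c x p)))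
    (hcoc : ∀ (x y : G) (p : G ⧸ H), c (x * y) p = c x p * c y (x⁻¹ • p))
    (hc1 : ∀ p, c 1 p = 1)
    {𝓗 : Type*} [NormedAddCommGroup 𝓗] [InnerProductSpace ℂ 𝓗] [CompleteSpace 𝓗]
    -- the unitary representation `π` of `H`
    (π : H →* (𝓗 →L[ℂ] 𝓗))
    (hπ : ∀ (h : H) (v w : 𝓗), ⟪π h v, π h w⟫ = ⟪v, w⟫) :
    -- (a) the equivariance condition `ξ(xh) = π(h⁻¹) ξ(x)` is preserved
    (∀ (x : G) (ξ : G → 𝓗), (∀ (y : G) (h : H), ξ (y * (h : G)) = π h⁻¹ (ξ y)) →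
      ∀ (y : G) (h : H), indRep H c x ξ (y * (h : G)) = π h⁻¹ (indRep H c x ξ y)) ∧
    -- (b) the inner product of `𝓗(π)` is preserved: each operator is unitary
    (∀ (x : G) (ξ η : G → 𝓗),
      (∀ (y : G) (h : H), ξ (y * (h : G)) = π h⁻¹ (ξ y)) →
      (∀ (y : G) (h : H), η (y * (h : G)) = π h⁻¹ (η y)) →
      Integrable (fun p : G ⧸ H => (⟪ξ p.out, η p.out⟫ : ℂ)) μ →
      (∫ p : G ⧸ H, (⟪indRep H c x ξ p.out, indRep H c x η p.out⟫ : ℂ) ∂μ) =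
        ∫ p : G ⧸ H, (⟪ξ p.out, η p.out⟫ : ℂ) ∂μ) ∧
    -- (c) `x ↦ ind_H^G π (x)` is a group homomorphism
    (∀ ξ : G → 𝓗, indRep H c 1 ξ = ξ) ∧
    (∀ (x₁ x₂ : G) (ξ : G → 𝓗),
      indRep H c (x₁ * x₂) ξ = indRep H c x₁ (indRep H c x₂ ξ)) := by
  refine ⟨?_, ?_, ?_, ?_⟩
  · -- (a) equivariance
    intro x ξ hξ y h
    show Real.sqrt (c x (QuotientGroup.mk (y * (h:G)))) • ξ (x⁻¹ * (y * (h:G)))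
        = π h⁻¹ (Real.sqrt (c x (QuotientGroup.mk y)) • ξ (x⁻¹ * y))
    rw [QuotientGroup.mk_mul_of_mem y h.2, ← mul_assoc, hξ (x⁻¹ * y) h,
      ContinuousLinearMap.map_smul_of_tower]
  · -- ============ part (b) ============
    intro x ξ η hξ hη hint
    classical
    have hτ : ∀ z : G, Measurable (fun p : G ⧸ H => z • p) :=
      fun z => (continuous_const_smul z).measurable
    set Φ : G → ℂ := fun y => ⟪ξ y, η y⟫ with hΦdef
    have hΦcoset : ∀ y y' : G, (QuotientGroup.mk y : G ⧸ H) = QuotientGroup.mk y' →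
        Φ y = Φ y' := by
      intro y y' hyy
      have hmem : y⁻¹ * y' ∈ H := QuotientGroup.eq.1 hyy
      have hy' : y' = y * ((⟨y⁻¹ * y', hmem⟩ : H) : G) := by
        simp [mul_assoc, mul_inv_cancel_left]
      rw [hy']
      simp only [hΦdef]
      rw [hξ y ⟨y⁻¹ * y', hmem⟩, hη y ⟨y⁻¹ * y', hmem⟩, hπ]
    set F : G ⧸ H → ℂ := fun p => (⟪ξ p.out, η p.out⟫ : ℂ) with hFdef
    have hF : ∀ (z : G) (p : G ⧸ H), Φ (z * p.out) = F (z • p) := by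
      intro z p
      have h1 : (QuotientGroup.mk (z * p.out) : G ⧸ H) = QuotientGroup.mk ((z • p).out) := by
        rw [QuotientGroup.out_eq', ← MulAction.Quotient.mk_smul_out (H := H) z p, smul_eq_mul]
      exact hΦcoset _ _ h1
    have hint_eq : ∀ p : G ⧸ H, (⟪indRep H c x ξ p.out, indRep H c x η p.out⟫ : ℂ)
        = (c x p) • F (x⁻¹ • p) := by
      intro p
      show (⟪Real.sqrt (c x (QuotientGroup.mk p.out)) • ξ (x⁻¹ * p.out),
            Real.sqrt (c x (QuotientGroup.mk p.out)) • η (x⁻¹ * p.out)⟫ : ℂ) = _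
      rw [QuotientGroup.out_eq' p]
      set r := Real.sqrt (c x p) with hr
      have hsm : ∀ u : 𝓗, r • u = ((r : ℂ)) • u := fun u => by
        rw [← smul_one_smul ℂ r u]; norm_num
      rw [hsm, hsm, inner_smul_left, inner_smul_right]
      rw [← hF x⁻¹ p]
      have : (starRingEnd ℂ) (r : ℂ) * ((r:ℂ) * ⟪ξ (x⁻¹ * p.out), η (x⁻¹ * p.out)⟫)
          = ((r * r : ℝ) : ℂ) * Φ (x⁻¹ * p.out) := by
        simp only [Complex.conj_ofReal, hΦdef]
        push_cast
        ring
      rw [this, hr, Real.mul_self_sqrt (hcpos x p).le]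
      rw [Complex.real_smul]
    rw [integral_congr_ae (Filter.Eventually.of_forall hint_eq)]
    -- measurable representative of F
    obtain ⟨F', hF'sm, hFF'⟩ := hint.aestronglyMeasurable
    have hF'int : Integrable F' μ := hint.congr hFF'
    set T : Set (G ⧸ H) := {q | F' q ≠ 0} with hTdef
    have hT : MeasurableSet T := by
      have : T = F' ⁻¹' ({0}ᶜ) := rfl
      rw [this]
      exact hF'sm.measurable (measurableSet_singleton 0).compl
    set Tj : ℕ → Set (G ⧸ H) := fun j => {q | 1 / (j + 1 : ℝ) ≤ ‖F' q‖} with hTjdef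
    have hTjm : ∀ j, MeasurableSet (Tj j) := by
      intro j
      have : Tj j = (fun q => ‖F' q‖) ⁻¹' (Set.Ici (1 / (j + 1 : ℝ))) := rfl
      rw [this]
      exact hF'sm.measurable.norm measurableSet_Ici
    have hTjfin : ∀ j, μ (Tj j) < ∞ := fun j =>
      hF'int.measure_norm_ge_lt_top (by positivity)
    have hTjsub : ∀ j, Tj j ⊆ T := by
      intro j q hq
      have h1 : (0:ℝ) < 1 / (j + 1 : ℝ) := by positivity
      have : (0:ℝ) < ‖F' q‖ := lt_of_lt_of_le h1 hq
      simpa [hTdef] using norm_pos_iff.1 this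
    have hTcov : T ⊆ ⋃ j, Tj j := by
      intro q hq
      have h1 : (0:ℝ) < ‖F' q‖ := norm_pos_iff.2 hq
      obtain ⟨j, hj⟩ := exists_nat_one_div_lt h1
      exact Set.mem_iUnion.2 ⟨j, le_of_lt hj⟩
    haveI hTsf : SigmaFinite (μ.restrict T) := by
      refine sigmaFinite_restrict_of_cover μ hT Tj hTjm hTcov fun j => ?_
      exact lt_of_le_of_lt (measure_mono Set.inter_subset_left) (hTjfin j)
    -- densities
    set fi : G ⧸ H → ℝ≥0∞ := fun p => ENNReal.ofReal (c x⁻¹ p) with hfidef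
    set fx : G ⧸ H → ℝ≥0∞ := fun p => ENNReal.ofReal (c x p) with hfxdef
    have hfi_pos : ∀ p, fi p ≠ 0 := fun p => by
      simp only [hfidef]
      exact (ENNReal.ofReal_pos.2 (hcpos x⁻¹ p)).ne'
    have hfi_fin : ∀ p, fi p ≠ ∞ := fun p => ENNReal.ofReal_ne_top
    have hfx_fin : ∀ p, fx p ≠ ∞ := fun p => ENNReal.ofReal_ne_top
    have hmapinv : μ.map (fun p : G ⧸ H => x⁻¹ • p) = μ.withDensity fi := hqi x⁻¹
    have hmap : μ.map (fun p : G ⧸ H => x • p) = μ.withDensity fx := hqi x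
    have hrecip : ∀ p, fi p * fx (x • p) = 1 := by
      intro p
      have h0 := hcoc x⁻¹ x p
      rw [inv_mul_cancel, hc1, inv_inv] at h0
      simp only [hfidef, hfxdef]
      rw [← ENNReal.ofReal_mul (hcpos x⁻¹ p).le, ← h0, ENNReal.ofReal_one]
    have hrecip2 : ∀ p, fx p * fi (x⁻¹ • p) = 1 := by
      intro p
      have h0 := hcoc x x⁻¹ p
      rw [mul_inv_cancel, hc1] at h0
      simp only [hfidef, hfxdef]
      rw [← ENNReal.ofReal_mul (hcpos x p).le, ← h0, ENNReal.ofReal_one]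
    -- per-set envelope of fi on T
    obtain ⟨h₁, hh1m, hh1le, hh1set⟩ := exists_measurable_env (μ.restrict T) fi
    have hset1 : ∀ s : Set (G ⧸ H), MeasurableSet s → s ⊆ T →
        ∫⁻ a in s, h₁ a ∂μ = ∫⁻ a in s, fi a ∂μ := by
      intro s hs hsub
      have h0 := hh1set s hs
      rwa [Measure.restrict_restrict hs, Set.inter_eq_self_of_subset_left hsub] at h0
    have hμpre : ∀ s : Set (G ⧸ H), MeasurableSet s →
        μ ((fun p : G ⧸ H => x⁻¹ • p) ⁻¹' s) = ∫⁻ a in s, fi a ∂μ := by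
      intro s hs
      rw [← Measure.map_apply (hτ x⁻¹) hs, hmapinv, withDensity_apply fi hs]
    set B : Set (G ⧸ H) := (fun p : G ⧸ H => x⁻¹ • p) ⁻¹' T with hBdef
    have hB : MeasurableSet B := hτ x⁻¹ hT
    haveI hBsf : SigmaFinite (μ.restrict B) := by
      set b : ℕ → Set (G ⧸ H) := fun n =>
        (fun p : G ⧸ H => x⁻¹ • p) ⁻¹'
          (Tj (Nat.unpair n).1 ∩ {a | h₁ a ≤ ((Nat.unpair n).2 : ℝ≥0∞)}) with hbdef
      have hbm : ∀ n, MeasurableSet (b n) :=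
        fun n => hτ x⁻¹ ((hTjm _).inter (hh1m measurableSet_Iic))
      refine sigmaFinite_restrict_of_cover μ hB b hbm ?_ ?_
      · intro p hp
        obtain ⟨s0, ⟨j, rfl⟩, hj⟩ := hTcov hp
        have hfin : h₁ (x⁻¹ • p) ≠ ∞ :=
          fun h => hfi_fin (x⁻¹ • p) (top_le_iff.1 (h ▸ hh1le (x⁻¹ • p)))
        obtain ⟨n, hn⟩ := ENNReal.exists_nat_gt hfin
        refine Set.mem_iUnion.2 ⟨Nat.pair j n, ?_⟩
        simp only [hbdef, Set.mem_preimage, Nat.unpair_pair, Set.mem_inter_iff, Set.mem_setOf_eq]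
        exact ⟨hj, hn.le⟩
      · intro n
        refine lt_of_le_of_lt (measure_mono Set.inter_subset_left) ?_
        set s0 := Tj (Nat.unpair n).1 ∩ {a | h₁ a ≤ ((Nat.unpair n).2 : ℝ≥0∞)} with hs0
        have hs0m : MeasurableSet s0 := (hTjm _).inter (hh1m measurableSet_Iic)
        have hs0T : s0 ⊆ T := Set.inter_subset_left.trans (hTjsub _)
        rw [show b n = (fun p : G ⧸ H => x⁻¹ • p) ⁻¹' s0 from rfl, hμpre s0 hs0m,
          ← hset1 s0 hs0m hs0T]
        calc ∫⁻ a in s0, h₁ a ∂μ ≤ ∫⁻ _ in s0, ((Nat.unpair n).2 : ℝ≥0∞) ∂μ := by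
              refine setLIntegral_mono' hs0m fun a ha => ?_
              exact ha.2
          _ = ((Nat.unpair n).2 : ℝ≥0∞) * μ s0 := setLIntegral_const _ _
          _ < ∞ := ENNReal.mul_lt_top (by simp)
              (lt_of_le_of_lt (measure_mono Set.inter_subset_left) (hTjfin _))
    -- per-set envelope of fx on B
    obtain ⟨h₂, hh2m, hh2le, hh2set⟩ := exists_measurable_env (μ.restrict B) fx
    have hset2 : ∀ u : Set (G ⧸ H), MeasurableSet u → u ⊆ B →
        ∫⁻ a in u, h₂ a ∂μ = ∫⁻ a in u, fx a ∂μ := by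
      intro u hu hsub
      have h0 := hh2set u hu
      rwa [Measure.restrict_restrict hu, Set.inter_eq_self_of_subset_left hsub] at h0
    -- the key identity: ∫⁻_s h₂(x•a) * fi a = μ s for measurable s ⊆ T
    set κ : G ⧸ H → ℝ≥0∞ := fun a => h₂ (x • a) * fi a with hκdef
    have hκ_le_one : ∀ a, κ a ≤ 1 := by
      intro a
      calc κ a ≤ fx (x • a) * fi a := mul_le_mul_left (hh2le (x • a)) _
        _ = 1 := by rw [mul_comm]; exact hrecip a
    have hκint : ∀ s : Set (G ⧸ H), MeasurableSet s → s ⊆ T →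
        ∫⁻ a in s, κ a ∂μ = μ s := by
      intro s hs hsub
      set u : Set (G ⧸ H) := (fun p : G ⧸ H => x⁻¹ • p) ⁻¹' s with hudef
      have hum : MeasurableSet u := hτ x⁻¹ hs
      have husub : u ⊆ B := fun p hp => hsub hp
      set w : G ⧸ H → ℝ≥0∞ := fun q => s.indicator (fun q => h₂ (x • q)) q with hwdef
      have hwm : Measurable w := (hh2m.comp (hτ x)).indicator hs
      have hwfin : ∀ q, w q ≠ ∞ := by
        intro q
        by_cases hq : q ∈ s
        · simp only [hwdef]
          rw [Set.indicator_of_mem hq]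
          exact fun h => hfx_fin (x • q) (top_le_iff.1 (h ▸ hh2le (x • q)))
        · simp only [hwdef]
          rw [Set.indicator_of_notMem hq]
          exact ENNReal.zero_ne_top
      have e1 : μ s = μ ((fun p : G ⧸ H => x • p) ⁻¹' u) := by
        congr 1
        ext p
        simp [hudef, inv_smul_smul]
      have e2 : μ ((fun p : G ⧸ H => x • p) ⁻¹' u) = ∫⁻ a in u, fx a ∂μ := by
        rw [← Measure.map_apply (hτ x) hum, hmap, withDensity_apply fx hum]
      have e3 : ∫⁻ a in u, fx a ∂μ = ∫⁻ a in u, h₂ a ∂μ := (hset2 u hum husub).symm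
      have e4 : ∫⁻ a in u, h₂ a ∂μ = ∫⁻ p, u.indicator h₂ p ∂μ :=
        (lintegral_indicator hum h₂).symm
      have e5 : ∀ p, u.indicator h₂ p = w (x⁻¹ • p) := by
        intro p
        simp only [hwdef]
        by_cases hp : p ∈ u
        · rw [Set.indicator_of_mem hp, Set.indicator_of_mem (show x⁻¹ • p ∈ s from hp),
            smul_inv_smul]
        · rw [Set.indicator_of_notMem hp,
            Set.indicator_of_notMem (show x⁻¹ • p ∉ s from hp)]
      have e6 : ∫⁻ p, u.indicator h₂ p ∂μ = ∫⁻ q, w q ∂(μ.map (fun p : G ⧸ H => x⁻¹ • p)) := by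
        rw [lintegral_map hwm (hτ x⁻¹)]
        exact lintegral_congr e5
      have e7 : ∫⁻ q, w q ∂(μ.map (fun p : G ⧸ H => x⁻¹ • p)) = ∫⁻ q, w q * fi q ∂μ := by
        rw [hmapinv]
        exact lintegral_wd_arb μ fi w hwm hwfin
      have e8 : ∫⁻ q, w q * fi q ∂μ = ∫⁻ a in s, κ a ∂μ := by
        rw [← lintegral_indicator hs κ]
        refine lintegral_congr fun q => ?_
        by_cases hq : q ∈ s
        · simp only [hwdef]
          rw [Set.indicator_of_mem hq, Set.indicator_of_mem hq]
        · simp only [hwdef]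
          rw [Set.indicator_of_notMem hq, Set.indicator_of_notMem hq, zero_mul]
      rw [e1, e2, e3, e4, e6, e7, e8]
    -- κ = 1 a.e. on T
    have hκae : ∀ᵐ a ∂(μ.restrict T), κ a = 1 := by
      have hj : ∀ j, μ ({a | ¬ κ a = 1} ∩ Tj j) = 0 := by
        intro j
        obtain ⟨m, hmm, hmle, hmint⟩ :=
          exists_measurable_le_lintegral_eq (μ.restrict (Tj j)) κ
        have hμint : ∫⁻ a, κ a ∂(μ.restrict (Tj j)) = μ (Tj j) :=
          hκint (Tj j) (hTjm j) (hTjsub j)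
        have hm1 : ∀ᵐ a ∂(μ.restrict (Tj j)), m a = 1 := by
          have hmle1 : ∀ a, m a ≤ 1 := fun a => (hmle a).trans (hκ_le_one a)
          have hmfin : ∫⁻ a, m a ∂(μ.restrict (Tj j)) ≠ ∞ := by
            rw [← hmint, hμint]; exact (hTjfin j).ne
          have hsub0 : ∫⁻ a, 1 - m a ∂(μ.restrict (Tj j)) = 0 := by
            rw [lintegral_sub hmm hmfin (Filter.Eventually.of_forall hmle1)]
            rw [← hmint, hμint, lintegral_one, Measure.restrict_apply_univ, tsub_self]
          have := (lintegral_eq_zero_iff (measurable_const.sub hmm)).1 hsub0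
          refine this.mono fun a ha => ?_
          have : (1:ℝ≥0∞) - m a = 0 := ha
          exact le_antisymm (hmle1 a) (tsub_eq_zero_iff_le.1 this)
        have hκ1 : ∀ᵐ a ∂(μ.restrict (Tj j)), κ a = 1 := by
          refine hm1.mono fun a ha => le_antisymm (hκ_le_one a) ?_
          rw [← ha]; exact hmle a
        have := ae_iff.1 hκ1
        rwa [Measure.restrict_apply' (hTjm j)] at this
      rw [ae_iff, Measure.restrict_apply' hT]
      refine measure_mono_null (fun a ha => ?_) (measure_iUnion_null_iff.2 hj)
      obtain ⟨s0, ⟨j, rfl⟩, hjmem⟩ := hTcov ha.2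
      exact Set.mem_iUnion.2 ⟨j, ⟨ha.1, hjmem⟩⟩
    -- consequence: fi = (h₂ ∘ (x • ·))⁻¹ a.e. on T
    have hfi_ae : ∀ᵐ a ∂(μ.restrict T),
        fi a = (h₂ (x • a))⁻¹ ∧ h₂ (x • a) ≠ 0 ∧ h₂ (x • a) ≠ ∞ := by
      refine hκae.mono fun a ha => ?_
      have ha' : h₂ (x • a) * fi a = 1 := ha
      have h0 : h₂ (x • a) ≠ 0 := by
        intro h
        rw [h, zero_mul] at ha'
        exact zero_ne_one ha'
      have hinf : h₂ (x • a) ≠ ∞ := by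
        intro h
        rw [h, ENNReal.top_mul (hfi_pos a)] at ha'
        exact (ENNReal.top_ne_one) ha'
      refine ⟨?_, h0, hinf⟩
      have := congrArg (fun t => (h₂ (x • a))⁻¹ * t) ha'
      rwa [← mul_assoc, ENNReal.inv_mul_cancel h0 hinf, one_mul, mul_one] at this
    -- null set transfer through the translation
    have htransfer : ∀ N : Set (G ⧸ H), μ N = 0 →
        μ ((fun p : G ⧸ H => x⁻¹ • p) ⁻¹' N) = 0 := by
      intro N hN
      obtain ⟨N', hNsub, hN'm, hN'0⟩ := exists_measurable_superset_of_null hN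
      have h0 : μ ((fun p : G ⧸ H => x⁻¹ • p) ⁻¹' N') = 0 := by
        rw [hμpre N' hN'm, Measure.restrict_eq_zero.2 hN'0, lintegral_zero_measure]
      exact measure_mono_null (Set.preimage_mono hNsub) h0
    have hae1 : ∀ᵐ p ∂μ, F (x⁻¹ • p) = F' (x⁻¹ • p) := by
      rw [ae_iff]
      refine measure_mono_null (fun p hp => ?_) (htransfer {q | ¬ F q = F' q} (ae_iff.1 hFF'))
      exact hp
    have hae2 : ∀ᵐ p ∂μ, x⁻¹ • p ∈ T →
        (fi (x⁻¹ • p) = (h₂ p)⁻¹ ∧ h₂ p ≠ 0 ∧ h₂ p ≠ ∞) := by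
      have hb : μ ({a | ¬ (fi a = (h₂ (x • a))⁻¹ ∧ h₂ (x • a) ≠ 0 ∧ h₂ (x • a) ≠ ∞)} ∩ T) = 0 := by
        have h0 := ae_iff.1 hfi_ae
        rwa [Measure.restrict_apply' hT] at h0
      rw [ae_iff]
      refine measure_mono_null (fun p hp => ?_) (htransfer _ hb)
      simp only [Set.mem_setOf_eq, Classical.not_imp] at hp
      refine ⟨?_, hp.1⟩
      intro hcontra
      rw [smul_inv_smul] at hcontra
      exact hp.2 hcontra
    -- main computation
    set W : G ⧸ H → ℂ := fun q => T.indicator (fun q => (h₂ (x • q)).toReal • F' q) q with hWdef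
    have hWm : Measurable W := by
      refine Measurable.indicator ?_ hT
      exact ((hh2m.comp (hτ x)).ennreal_toReal).smul hF'sm.measurable
    have hWsm : StronglyMeasurable W := hWm.stronglyMeasurable
    have step1 : (fun p => (c x p) • F (x⁻¹ • p)) =ᵐ[μ] fun p => W (x⁻¹ • p) := by
      filter_upwards [hae1, hae2] with p h1 h2
      by_cases hp : x⁻¹ • p ∈ T
      · obtain ⟨hfieq, h0, hinf⟩ := h2 hp
        have hfx : fx p = h₂ p := by
          have hr := hrecip2 p
          rw [hfieq] at hr
          have h3 : fx p * ((h₂ p)⁻¹ * h₂ p) = h₂ p := by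
            rw [← mul_assoc, hr, one_mul]
          rwa [ENNReal.inv_mul_cancel h0 hinf, mul_one] at h3
        have hc : c x p = (h₂ p).toReal := by
          rw [← hfx, hfxdef]
          exact (ENNReal.toReal_ofReal (hcpos x p).le).symm
        rw [h1, hc, hWdef]
        simp only []
        rw [Set.indicator_of_mem hp, smul_inv_smul]
      · have hF0 : F' (x⁻¹ • p) = 0 := by
          by_contra hcon
          exact hp hcon
        rw [h1, hF0, smul_zero]
        simp only [hWdef]
        rw [Set.indicator_of_notMem hp]
    rw [integral_congr_ae step1]
    -- change of variables
    have step2 : ∫ p, W (x⁻¹ • p) ∂μ = ∫ q, W q ∂(μ.withDensity fi) := by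
      rw [← hmapinv]
      exact (integral_map (hτ x⁻¹).aemeasurable
        (hWsm.aestronglyMeasurable (μ := μ.map (fun p : G ⧸ H => x⁻¹ • p)))).symm
    rw [step2]
    have step3 : ∫ q, W q ∂(μ.withDensity fi)
        = ∫ q, (h₂ (x • q)).toReal • F' q ∂((μ.restrict T).withDensity fi) := by
      simp only [hWdef]
      rw [integral_indicator hT, ← restrict_withDensity hT]
    rw [step3]
    set G₁ : G ⧸ H → ℝ≥0 := fun q => ((h₂ (x • q))⁻¹).toNNReal with hG₁def
    have hG₁m : Measurable G₁ := ((hh2m.comp (hτ x)).inv).ennreal_toNNReal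
    have step4 : (μ.restrict T).withDensity fi
        = (μ.restrict T).withDensity (fun q => (G₁ q : ℝ≥0∞)) := by
      refine withDensity_congr_ae ?_
      refine hfi_ae.mono fun a ⟨he, h0, hinf⟩ => ?_
      show fi a = ((G₁ a : ℝ≥0) : ℝ≥0∞)
      rw [he]
      simp only [hG₁def]
      rw [ENNReal.coe_toNNReal (ENNReal.inv_ne_top.2 h0)]
    rw [step4, integral_withDensity_eq_integral_smul hG₁m]
    have step5 : (fun q => G₁ q • (h₂ (x • q)).toReal • F' q) =ᵐ[μ.restrict T] F' := by
      refine hfi_ae.mono fun a ⟨he, h0, hinf⟩ => ?_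
      show G₁ a • (h₂ (x • a)).toReal • F' a = F' a
      have htr : ((G₁ a : ℝ≥0) : ℝ) = ((h₂ (x • a))⁻¹).toReal := rfl
      rw [NNReal.smul_def, htr, smul_smul, ENNReal.toReal_inv,
        inv_mul_cancel₀ (ENNReal.toReal_ne_zero.2 ⟨h0, hinf⟩), one_smul]
    rw [integral_congr_ae step5]
    have step6 : ∫ q, F' q ∂(μ.restrict T) = ∫ q, F' q ∂μ := by
      rw [← integral_indicator hT]
      refine integral_congr_ae (Filter.Eventually.of_forall fun q => ?_)
      by_cases hq : q ∈ T
      · rw [Set.indicator_of_mem hq]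
      · rw [Set.indicator_of_notMem hq]
        by_contra hcon
        exact hq fun hzero => hcon hzero.symm
    rw [step6]
    exact integral_congr_ae hFF'.symm
  · -- (c) identity
    intro ξ
    funext y
    show Real.sqrt (c 1 (QuotientGroup.mk y)) • ξ ((1:G)⁻¹ * y) = ξ y
    rw [hc1, Real.sqrt_one, one_smul, inv_one, one_mul]
  · -- (c) multiplicativity
    intro x₁ x₂ ξ
    funext y
    show Real.sqrt (c (x₁ * x₂) (QuotientGroup.mk y)) • ξ ((x₁ * x₂)⁻¹ * y)
        = Real.sqrt (c x₁ (QuotientGroup.mk y)) •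
            (Real.sqrt (c x₂ (QuotientGroup.mk (x₁⁻¹ * y))) • ξ (x₂⁻¹ * (x₁⁻¹ * y)))
    rw [hcoc x₁ x₂ (QuotientGroup.mk y), Real.sqrt_mul (hcpos x₁ _).le, smul_smul,
      mul_inv_rev, mul_assoc, MulAction.Quotient.smul_mk H x₁⁻¹ y, smul_eq_mul]
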